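/- Let G be a connected simple graph with maximum degree Δ(G) ≥ 5. Then the subdivision graph S(G) is AVD-Type 1, i.e., χ''_a(S(G)) = Δ(S(G)) + 1 = Δ(G) + 1. -/

import Mathlib

open SimpleGraph

/-- The subdivision graph `S(G)`: each edge `{u,v}` of `G` is replaced by a new
vertex (the element of `G.edgeSet`) adjacent to both `u` and `v`. -/
def subdivisionGraph {V : Type*} (G : SimpleGraph V) : SimpleGraph (V ⊕ G.edgeSet) where
  Adj x y :=
    match x, y with
    | Sum.inl u, Sum.inr e => u ∈ (e : Sym2 V)
    | Sum.inr e, Sum.inl u => u ∈ (e : Sym2 V)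
    | _, _ => False
  symm := by refine ⟨?_⟩; rintro (u | e) (v | f) h <;> simp_all
  loopless := by refine ⟨?_⟩; rintro (u | e) h <;> simp_all

/-- The central graph `C(G)`: obtained from the subdivision graph `S(G)` by joining
every pair of distinct vertices of `G` that are non-adjacent in `G`. -/
def centralGraph {V : Type*} (G : SimpleGraph V) : SimpleGraph (V ⊕ G.edgeSet) where
  Adj x y :=
    match x, y with
    | Sum.inl u, Sum.inl v => u ≠ v ∧ ¬ G.Adj u v
    | Sum.inl u, Sum.inr e => u ∈ (e : Sym2 V)
    | Sum.inr e, Sum.inl u => u ∈ (e : Sym2 V)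
    | Sum.inr _, Sum.inr _ => False
  symm := by
    refine ⟨?_⟩
    rintro (u | e) (v | f) h
    · exact ⟨h.1.symm, fun a => h.2 a.symm⟩
    · exact h
    · exact h
    · exact h
  loopless := by
    refine ⟨?_⟩
    rintro (u | e) h
    · exact h.1 rfl
    · exact h

/-- The middle graph `M(G)`: obtained from the subdivision graph `S(G)` by joining
each pair of distinct subdivided vertices corresponding to adjacent edges of `G`. -/
def middleGraph {V : Type*} (G : SimpleGraph V) : SimpleGraph (V ⊕ G.edgeSet) where
  Adj x y :=
    match x, y with
    | Sum.inl u, Sum.inr e => u ∈ (e : Sym2 V)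
    | Sum.inr e, Sum.inl u => u ∈ (e : Sym2 V)
    | Sum.inr e, Sum.inr f => e ≠ f ∧ ∃ u, u ∈ (e : Sym2 V) ∧ u ∈ (f : Sym2 V)
    | Sum.inl _, Sum.inl _ => False
  symm := by
    refine ⟨?_⟩
    rintro (u | e) (v | f) h
    · exact h
    · exact h
    · exact h
    · exact ⟨h.1.symm, h.2.imp fun u hu => ⟨hu.2, hu.1⟩⟩
  loopless := by
    refine ⟨?_⟩
    rintro (u | e) h
    · exact h
    · exact h.1 rfl

/-- The line graph `L(G)`: vertices are the edges of `G`, two distinct edges being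
adjacent when they share an endpoint. -/
def lineG {V : Type*} (G : SimpleGraph V) : SimpleGraph G.edgeSet where
  Adj e f := e ≠ f ∧ ∃ u, u ∈ (e : Sym2 V) ∧ u ∈ (f : Sym2 V)
  symm := ⟨fun e f h => ⟨h.1.symm, h.2.imp fun u hu => ⟨hu.2, hu.1⟩⟩⟩
  loopless := ⟨fun e h => h.1 rfl⟩

/-- The endline graph `G⁺`: to each vertex `v` of `G` we attach a new pendant
vertex; `Sum.inl` is the copy of `V(G)` and `Sum.inr` are the new vertices. -/
def endlineGraph {V : Type*} (G : SimpleGraph V) : SimpleGraph (V ⊕ V) where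
  Adj x y :=
    match x, y with
    | Sum.inl u, Sum.inl v => G.Adj u v
    | Sum.inl u, Sum.inr v => u = v
    | Sum.inr u, Sum.inl v => u = v
    | Sum.inr _, Sum.inr _ => False
  symm := by
    refine ⟨?_⟩
    rintro (u | u) (v | v) h
    · exact h.symm
    · exact h.symm
    · exact h.symm
    · exact h
  loopless := by
    refine ⟨?_⟩
    rintro (u | u) h
    · exact G.irrefl h
    · exact h

/-- The join `G₁ + G₂` of two vertex-disjoint graphs: their disjoint union together
with all edges between the two vertex sets. -/
def joinGraph {V₁ V₂ : Type*} (G₁ : SimpleGraph V₁) (G₂ : SimpleGraph V₂) :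
    SimpleGraph (V₁ ⊕ V₂) where
  Adj x y :=
    match x, y with
    | Sum.inl u, Sum.inl v => G₁.Adj u v
    | Sum.inr u, Sum.inr v => G₂.Adj u v
    | Sum.inl _, Sum.inr _ => True
    | Sum.inr _, Sum.inl _ => True
  symm := by
    refine ⟨?_⟩
    rintro (u | u) (v | v) h
    · exact h.symm
    · trivial
    · trivial
    · exact h.symm
  loopless := by
    refine ⟨?_⟩
    rintro (u | u) h
    · exact G₁.irrefl h
    · exact G₂.irrefl h

/-- The maximum degree `Δ(H)` of a graph (as a supremum of cardinalities of
neighborhoods, which agrees with the usual maximum degree for finite graphs). -/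
noncomputable def maxDeg {W : Type*} (H : SimpleGraph W) : ℕ :=
  sSup {k | ∃ v : W, k = (H.neighborSet v).ncard}

/-- A graph is regular if all vertices have the same degree. -/
def IsRegularGraph {W : Type*} (H : SimpleGraph W) : Prop :=
  ∀ u v : W, (H.neighborSet u).ncard = (H.neighborSet v).ncard

/-- The distinguishing number `D(H)`: the least `d` such that `H` admits a vertex
coloring with `d` colors preserved only by the identity automorphism. -/
noncomputable def distinguishingNumber {W : Type*} (H : SimpleGraph W) : ℕ :=
  sInf {d | ∃ c : W → Fin d, ∀ φ : H ≃g H, (∀ v, c (φ v) = c v) → ∀ v, φ v = v}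

/-- The distinguishing index `D'(H)`: the least `d` such that `H` admits an edge
coloring with `d` colors preserved only by the identity automorphism. -/
noncomputable def distinguishingIndex {W : Type*} (H : SimpleGraph W) : ℕ :=
  sInf {d | ∃ c : H.edgeSet → Fin d,
    ∀ φ : H ≃g H, (∀ e, c (φ.mapEdgeSet e) = c e) → ∀ v, φ v = v}

/-- A proper total coloring of `H` with `d` colors: adjacent vertices, adjacent
edges, and incident vertex/edge pairs receive distinct colors. -/
def IsProperTotalColoring {W : Type*} (H : SimpleGraph W) {d : ℕ}
    (f : W ⊕ H.edgeSet → Fin d) : Prop :=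
  (∀ u v : W, H.Adj u v → f (Sum.inl u) ≠ f (Sum.inl v)) ∧
  (∀ e e' : H.edgeSet, e ≠ e' → (∃ u, u ∈ (e : Sym2 W) ∧ u ∈ (e' : Sym2 W)) →
    f (Sum.inr e) ≠ f (Sum.inr e')) ∧
  (∀ (v : W) (e : H.edgeSet), v ∈ (e : Sym2 W) → f (Sum.inl v) ≠ f (Sum.inr e))

/-- An automorphism `φ` preserves a total coloring `f`. -/
def PreservesTotalColoring {W : Type*} (H : SimpleGraph W) {d : ℕ}
    (f : W ⊕ H.edgeSet → Fin d) (φ : H ≃g H) : Prop :=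
  (∀ v : W, f (Sum.inl (φ v)) = f (Sum.inl v)) ∧
  (∀ e : H.edgeSet, f (Sum.inr (φ.mapEdgeSet e)) = f (Sum.inr e))

/-- The total chromatic number `χ''(H)`. -/
noncomputable def totalChromaticNumber {W : Type*} (H : SimpleGraph W) : ℕ :=
  sInf {d | ∃ f : W ⊕ H.edgeSet → Fin d, IsProperTotalColoring H f}

/-- The total distinguishing chromatic number `χ''_D(H)`: the least `d` such that
`H` has a proper total coloring with `d` colors preserved only by the identity. -/
noncomputable def totalDistinguishingChromaticNumber {W : Type*} (H : SimpleGraph W) : ℕ :=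
  sInf {d | ∃ f : W ⊕ H.edgeSet → Fin d, IsProperTotalColoring H f ∧
    ∀ φ : H ≃g H, PreservesTotalColoring H f φ → ∀ v, φ v = v}

/-- The color class `C_H(u)` of a vertex under a total coloring: the color of `u`
together with the colors of the edges incident to `u`. -/
def totalColorClass {W : Type*} (H : SimpleGraph W) {d : ℕ}
    (f : W ⊕ H.edgeSet → Fin d) (u : W) : Set (Fin d) :=
  {f (Sum.inl u)} ∪ {x | ∃ e : H.edgeSet, u ∈ (e : Sym2 W) ∧ x = f (Sum.inr e)}

/-- An AVD-total coloring: a proper total coloring in which adjacent vertices have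
distinct color classes. -/
def IsAVDTotalColoring {W : Type*} (H : SimpleGraph W) {d : ℕ}
    (f : W ⊕ H.edgeSet → Fin d) : Prop :=
  IsProperTotalColoring H f ∧
  ∀ u v : W, H.Adj u v → totalColorClass H f u ≠ totalColorClass H f v

/-- The AVD-total chromatic number `χ''ₐ(H)`. -/
noncomputable def avdTotalChromaticNumber {W : Type*} (H : SimpleGraph W) : ℕ :=
  sInf {d | ∃ f : W ⊕ H.edgeSet → Fin d, IsAVDTotalColoring H f}

/-- A total dominator coloring: a proper vertex coloring such that every vertex is
adjacent to every vertex of some (nonempty) color class. -/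
def IsTotalDominatorColoring {W : Type*} (H : SimpleGraph W) {d : ℕ}
    (c : W → Fin d) : Prop :=
  (∀ u v : W, H.Adj u v → c u ≠ c v) ∧
  (∀ v : W, ∃ i : Fin d, (∃ w, c w = i) ∧ ∀ w, c w = i → H.Adj v w)

/-- The total dominator chromatic number `χᵗ_d(H)`. -/
noncomputable def tdChromaticNumber {W : Type*} (H : SimpleGraph W) : ℕ :=
  sInf {d | ∃ c : W → Fin d, IsTotalDominatorColoring H c}



theorem konig_col {X Y : Type*} [Fintype X] [Fintype Y] [DecidableEq X] [DecidableEq Y]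
    (k : ℕ) (hk : 0 < k) (n : ℕ) :
    ∀ R : Finset (X × Y), R.card = n →
    (∀ x : X, (R.filter (fun p => p.1 = x)).card ≤ k) →
    (∀ y : Y, (R.filter (fun p => p.2 = y)).card ≤ k) →
    ∃ c : X → Y → Fin k,
      (∀ x y1 y2, (x, y1) ∈ R → (x, y2) ∈ R → y1 ≠ y2 → c x y1 ≠ c x y2) ∧
      (∀ x1 x2 y, (x1, y) ∈ R → (x2, y) ∈ R → x1 ≠ x2 → c x1 y ≠ c x2 y) := by
  classical
  induction n with
  | zero =>
    intro R hR _ _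
    rw [Finset.card_eq_zero] at hR
    subst hR
    exact ⟨fun _ _ => ⟨0, hk⟩, by simp, by simp⟩
  | succ n ih =>
    intro R hR hrow hcol
    have hne : R.Nonempty := by rw [← Finset.card_pos, hR]; omega
    obtain ⟨⟨x0, y0⟩, hp0⟩ := hne
    set R' : Finset (X × Y) := R.erase (x0, y0) with hR'def
    have hR'card : R'.card = n := by
      rw [hR'def, Finset.card_erase_of_mem hp0, hR]; omega
    have hsub : R' ⊆ R := Finset.erase_subset _ _
    have hmemR' : ∀ p : X × Y, p ∈ R' ↔ p ∈ R ∧ p ≠ (x0, y0) := by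
      intro p; rw [hR'def, Finset.mem_erase]; tauto
    obtain ⟨c, crow, ccol⟩ := ih R' hR'card
      (fun x => le_trans (Finset.card_le_card (Finset.filter_subset_filter _ hsub)) (hrow x))
      (fun y => le_trans (Finset.card_le_card (Finset.filter_subset_filter _ hsub)) (hcol y))
    -- find missing colors
    have hfree : ∀ (P : X × Y → Prop) [DecidablePred P], P (x0, y0) →
        (R.filter P).card ≤ k →
        ∃ γ : Fin k, ∀ p ∈ R'.filter P, c p.1 p.2 ≠ γ := by
      intro P _ hP hPk
      have hlt : ((R'.filter P).image (fun p => c p.1 p.2)).card < k := by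
        have h1 : (R'.filter P).card < (R.filter P).card := by
          apply Finset.card_lt_card
          constructor
          · exact Finset.filter_subset_filter _ hsub
          · intro hss
            have h2 : (x0, y0) ∈ R' := (Finset.mem_filter.mp (hss (Finset.mem_filter.mpr ⟨hp0, hP⟩))).1
            exact ((hmemR' _).mp h2).2 rfl
        calc ((R'.filter P).image _).card ≤ (R'.filter P).card := Finset.card_image_le
        _ < (R.filter P).card := h1
        _ ≤ k := hPk
      have : (((R'.filter P).image (fun p => c p.1 p.2))ᶜ).Nonempty := by
        rw [← Finset.card_pos, Finset.card_compl, Fintype.card_fin]; omega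
      obtain ⟨γ, hγ⟩ := this
      rw [Finset.mem_compl] at hγ
      exact ⟨γ, fun p hp hc => hγ (Finset.mem_image.mpr ⟨p, hp, hc⟩)⟩
    obtain ⟨α, hα⟩ := hfree (fun p => p.1 = x0) rfl (hrow x0)
    obtain ⟨β, hβ⟩ := hfree (fun p => p.2 = y0) rfl (hcol y0)
    have hx0α : ∀ y, (x0, y) ∈ R' → c x0 y ≠ α := by
      intro y hy; exact hα _ (Finset.mem_filter.mpr ⟨hy, rfl⟩)
    have hy0β : ∀ x, (x, y0) ∈ R' → c x y0 ≠ β := by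
      intro x hx; exact hβ _ (Finset.mem_filter.mpr ⟨hx, rfl⟩)
    -- get a coloring proper on R' with α missing in row x0 and column y0
    have key : ∃ c1 : X → Y → Fin k,
        (∀ x y1 y2, (x, y1) ∈ R' → (x, y2) ∈ R' → y1 ≠ y2 → c1 x y1 ≠ c1 x y2) ∧
        (∀ x1 x2 y, (x1, y) ∈ R' → (x2, y) ∈ R' → x1 ≠ x2 → c1 x1 y ≠ c1 x2 y) ∧
        (∀ y, (x0, y) ∈ R' → c1 x0 y ≠ α) ∧
        (∀ x, (x, y0) ∈ R' → c1 x y0 ≠ α) := by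
      by_cases hab : α = β
      · exact ⟨c, crow, ccol, hx0α, fun x hx => hab ▸ hy0β x hx⟩
      · -- Kempe swap
        set step : Y → Y → Prop := fun y y' =>
          ∃ x, (x, y) ∈ R' ∧ c x y = α ∧ (x, y') ∈ R' ∧ c x y' = β with hstep
        set S : Set Y := {y | Relation.ReflTransGen step y0 y} with hS
        have hy0S : y0 ∈ S := Relation.ReflTransGen.refl
        set P : X → Prop := fun x => ∃ y', (x, y') ∈ R' ∧ c x y' = α ∧ y' ∈ S with hP
        set swap : Fin k → Fin k := ⇑(Equiv.swap α β) with hswap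
        have swapinj : Function.Injective swap := (Equiv.swap α β).injective
        have swapα : swap α = β := Equiv.swap_apply_left α β
        have swapβ : swap β = α := Equiv.swap_apply_right α β
        have swapo : ∀ γ, γ ≠ α → γ ≠ β → swap γ = γ := fun γ h1 h2 =>
          Equiv.swap_apply_of_ne_of_ne h1 h2
        set c1 : X → Y → Fin k := fun x y =>
          if c x y = α ∧ y ∈ S then β else if c x y = β ∧ P x then α else c x y with hc1
        have hrowP : ∀ x, P x → ∀ y, (x, y) ∈ R' → c1 x y = swap (c x y) := by
          intro x hPx y hy
          obtain ⟨y', hy', hcy', hy'S⟩ := hPx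
          by_cases h1 : c x y = α
          · have hyy : y = y' := by
              by_contra hne
              exact crow x y y' hy hy' hne (h1.trans hcy'.symm)
            subst hyy
            rw [h1, swapα]
            simp only [hc1]
            rw [if_pos ⟨h1, hy'S⟩]
          · by_cases h2 : c x y = β
            · rw [h2, swapβ]
              simp only [hc1]
              rw [if_neg (fun h => h1 h.1), if_pos ⟨h2, ⟨y', hy', hcy', hy'S⟩⟩]
            · rw [swapo _ h1 h2]
              simp only [hc1]
              rw [if_neg (fun h => h1 h.1), if_neg (fun h => h2 h.1)]
        have hrowN : ∀ x, ¬ P x → ∀ y, (x, y) ∈ R' → c1 x y = c x y := by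
          intro x hPx y hy
          simp only [hc1]
          rw [if_neg, if_neg]
          · exact fun h => hPx h.2
          · exact fun h => hPx ⟨y, hy, h.1, h.2⟩
        have hcolS : ∀ y, y ∈ S → ∀ x, (x, y) ∈ R' → c1 x y = swap (c x y) := by
          intro y hyS x hx
          by_cases h1 : c x y = α
          · rw [h1, swapα]
            simp only [hc1]
            rw [if_pos ⟨h1, hyS⟩]
          · by_cases h2 : c x y = β
            · have hPx : P x := by
                rcases Relation.ReflTransGen.cases_tail hyS with h | ⟨yp, hyp, hstepy⟩
                · subst h; exact absurd h2 (hy0β x hx)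
                · obtain ⟨x', hx', hcx', hx'y, hcy⟩ := hstepy
                  have hxx : x = x' := by
                    by_contra hne
                    exact ccol x x' y hx hx'y hne (h2.trans hcy.symm)
                  exact ⟨yp, hxx ▸ hx', hxx ▸ hcx', hyp⟩
              rw [h2, swapβ]
              simp only [hc1]
              rw [if_neg (fun h => h1 h.1), if_pos ⟨h2, hPx⟩]
            · rw [swapo _ h1 h2]
              simp only [hc1]
              rw [if_neg (fun h => h1 h.1), if_neg (fun h => h2 h.1)]
        have hcolN : ∀ y, y ∉ S → ∀ x, (x, y) ∈ R' → c1 x y = c x y := by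
          intro y hyS x hx
          simp only [hc1]
          rw [if_neg, if_neg]
          · rintro ⟨h2, hPx⟩
            obtain ⟨y', hy', hcy', hy'S⟩ := hPx
            exact hyS (Relation.ReflTransGen.tail hy'S ⟨x, hy', hcy', hx, h2⟩)
          · exact fun h => hyS h.2
        refine ⟨c1, ?_, ?_, ?_, ?_⟩
        · intro x y1 y2 h1 h2 hne
          by_cases hPx : P x
          · rw [hrowP x hPx y1 h1, hrowP x hPx y2 h2]
            exact fun h => crow x y1 y2 h1 h2 hne (swapinj h)
          · rw [hrowN x hPx y1 h1, hrowN x hPx y2 h2]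
            exact crow x y1 y2 h1 h2 hne
        · intro x1 x2 y h1 h2 hne
          by_cases hyS : y ∈ S
          · rw [hcolS y hyS x1 h1, hcolS y hyS x2 h2]
            exact fun h => ccol x1 x2 y h1 h2 hne (swapinj h)
          · rw [hcolN y hyS x1 h1, hcolN y hyS x2 h2]
            exact ccol x1 x2 y h1 h2 hne
        · intro y hy
          have hPx0 : ¬ P x0 := by
            rintro ⟨y', hy', hcy', _⟩
            exact hx0α y' hy' hcy'
          rw [hrowN x0 hPx0 y hy]
          exact hx0α y hy
        · intro x hx
          rw [hcolS y0 hy0S x hx]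
          have h2 : c x y0 ≠ β := hy0β x hx
          by_cases ha : c x y0 = α
          · rw [ha, swapα]; exact Ne.symm hab
          · rw [swapo _ ha h2]; exact ha
    obtain ⟨c1, c1row, c1col, c1rowfree, c1colfree⟩ := key
    refine ⟨fun x y => if x = x0 ∧ y = y0 then α else c1 x y, ?_, ?_⟩
    · intro x y1 y2 h1 h2 hne
      dsimp only
      by_cases e1 : x = x0 ∧ y1 = y0
      · obtain ⟨ex, ey⟩ := e1; subst ex; subst ey
        have e2 : ¬(x = x ∧ y2 = y1) := fun h => hne h.2.symm
        rw [if_pos ⟨rfl, rfl⟩, if_neg e2]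
        have : (x, y2) ∈ R' := (hmemR' _).mpr ⟨h2, by
          intro h; rw [Prod.mk.injEq] at h; exact e2 ⟨h.1, h.2⟩⟩
        exact fun h => c1rowfree y2 this h.symm
      · rw [if_neg e1]
        by_cases e2 : x = x0 ∧ y2 = y0
        · obtain ⟨ex, ey⟩ := e2; subst ex; subst ey
          rw [if_pos ⟨rfl, rfl⟩]
          have : (x, y1) ∈ R' := (hmemR' _).mpr ⟨h1, by
            intro h; rw [Prod.mk.injEq] at h; exact e1 ⟨h.1, h.2⟩⟩
          exact c1rowfree y1 this
        · rw [if_neg e2]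
          have m1 : (x, y1) ∈ R' := (hmemR' _).mpr ⟨h1, by
            intro h; rw [Prod.mk.injEq] at h; exact e1 ⟨h.1, h.2⟩⟩
          have m2 : (x, y2) ∈ R' := (hmemR' _).mpr ⟨h2, by
            intro h; rw [Prod.mk.injEq] at h; exact e2 ⟨h.1, h.2⟩⟩
          exact c1row x y1 y2 m1 m2 hne
    · intro x1 x2 y h1 h2 hne
      dsimp only
      by_cases e1 : x1 = x0 ∧ y = y0
      · obtain ⟨ex, ey⟩ := e1; subst ex; subst ey
        have e2 : ¬(x2 = x1 ∧ y = y) := fun h => hne h.1.symm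
        rw [if_pos ⟨rfl, rfl⟩, if_neg e2]
        have : (x2, y) ∈ R' := (hmemR' _).mpr ⟨h2, by
          intro h; rw [Prod.mk.injEq] at h; exact e2 ⟨h.1, h.2⟩⟩
        exact fun h => c1colfree x2 this h.symm
      · rw [if_neg e1]
        by_cases e2 : x2 = x0 ∧ y = y0
        · obtain ⟨ex, ey⟩ := e2; subst ex; subst ey
          rw [if_pos ⟨rfl, rfl⟩]
          have : (x1, y) ∈ R' := (hmemR' _).mpr ⟨h1, by
            intro h; rw [Prod.mk.injEq] at h; exact e1 ⟨h.1, h.2⟩⟩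
          exact c1colfree x1 this
        · rw [if_neg e2]
          have m1 : (x1, y) ∈ R' := (hmemR' _).mpr ⟨h1, by
            intro h; rw [Prod.mk.injEq] at h; exact e1 ⟨h.1, h.2⟩⟩
          have m2 : (x2, y) ∈ R' := (hmemR' _).mpr ⟨h2, by
            intro h; rw [Prod.mk.injEq] at h; exact e2 ⟨h.1, h.2⟩⟩
          exact c1col x1 x2 y m1 m2 hne



/-- For a connected graph `G` with `Δ(G) ≥ 5`, the subdivision
graph `S(G)` is AVD-Type 1: `χ''ₐ(S(G)) = Δ(S(G)) + 1 = Δ(G) + 1`. -/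
theorem stmt_17 {V : Type*} [Fintype V] (G : SimpleGraph V)
    (hconn : G.Connected) (hdeg : 5 ≤ maxDeg G) :
    avdTotalChromaticNumber (subdivisionGraph G) = maxDeg (subdivisionGraph G) + 1 ∧
    maxDeg (subdivisionGraph G) = maxDeg G := by
  classical
  letI : Fintype ↥G.edgeSet := Fintype.ofFinite _
  set Δ := maxDeg G with hΔdef
  set SG := subdivisionGraph G with hSGdef
  have adj12 : ∀ (u : V) (e : ↥G.edgeSet), SG.Adj (Sum.inl u) (Sum.inr e) ↔ u ∈ (e : Sym2 V) :=
    fun _ _ => Iff.rfl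
  have adj21 : ∀ (e : ↥G.edgeSet) (u : V), SG.Adj (Sum.inr e) (Sum.inl u) ↔ u ∈ (e : Sym2 V) :=
    fun _ _ => Iff.rfl
  have adj11 : ∀ u v : V, SG.Adj (Sum.inl u) (Sum.inl v) → False := fun _ _ h => h
  have adj22 : ∀ e e' : ↥G.edgeSet, SG.Adj (Sum.inr e) (Sum.inr e') → False := fun _ _ h => h
  -- basic facts about Δ
  have hbdd : BddAbove {k | ∃ v : V, k = (G.neighborSet v).ncard} := by
    refine ⟨Fintype.card V, ?_⟩
    rintro k ⟨v, rfl⟩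
    have h1 : (G.neighborSet v).ncard ≤ (Set.univ : Set V).ncard :=
      Set.ncard_le_ncard (Set.subset_univ _) Set.finite_univ
    simpa [Set.ncard_univ, Nat.card_eq_fintype_card] using h1
  have hsetne : {k | ∃ v : V, k = (G.neighborSet v).ncard}.Nonempty := by
    rcases isEmpty_or_nonempty V with h | h
    · exfalso
      have : {k | ∃ v : V, k = (G.neighborSet v).ncard} = ∅ := by
        ext k
        simp only [Set.mem_setOf_eq, Set.mem_empty_iff_false, iff_false]
        rintro ⟨v, -⟩
        exact IsEmpty.false v
      rw [hΔdef] at hdeg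
      unfold maxDeg at hdeg
      rw [this] at hdeg
      simp at hdeg
    · exact ⟨(G.neighborSet (Classical.arbitrary V)).ncard, ⟨_, rfl⟩⟩
  have hdegle : ∀ v : V, (G.neighborSet v).ncard ≤ Δ := fun v => le_csSup hbdd ⟨v, rfl⟩
  have hmax : ∃ v : V, (G.neighborSet v).ncard = Δ := by
    have := Nat.sSup_mem hsetne hbdd
    obtain ⟨v, hv⟩ := this
    exact ⟨v, hv.symm⟩
  -- incidence sets
  set I : V → Set ↥G.edgeSet := fun v => {e : ↥G.edgeSet | v ∈ (e : Sym2 V)} with hIdef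
  have hIcard : ∀ v : V, (I v).ncard = (G.neighborSet v).ncard := by
    intro v
    have e1 : ↥(I v) ≃ ↥(G.incidenceSet v) :=
      { toFun := fun e => ⟨e.1.1, e.1.2, e.2⟩
        invFun := fun e => ⟨⟨e.1, e.2.1⟩, e.2.2⟩
        left_inv := fun e => rfl
        right_inv := fun e => rfl }
    have e2 : ↥(G.incidenceSet v) ≃ ↥(G.neighborSet v) := G.incidenceSetEquivNeighborSet v
    rw [← Nat.card_coe_set_eq, ← Nat.card_coe_set_eq]
    exact Nat.card_congr (e1.trans e2)
  have hIle : ∀ v : V, (I v).ncard ≤ Δ := fun v => (hIcard v) ▸ hdegle v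
  -- decoding edges of G
  have hedge2 : ∀ e : ↥G.edgeSet, ∃ a b : V, a ≠ b ∧ (e : Sym2 V) = s(a, b) := by
    rintro ⟨z, hz⟩
    induction z using Sym2.ind with
    | _ a b =>
      rw [SimpleGraph.mem_edgeSet] at hz
      exact ⟨a, b, hz.ne, rfl⟩
  have hend2 : ∀ e : ↥G.edgeSet, ({v : V | v ∈ (e : Sym2 V)}).ncard = 2 := by
    intro e
    obtain ⟨a, b, hab, he⟩ := hedge2 e
    have : {v : V | v ∈ (e : Sym2 V)} = {a, b} := by
      ext v; simp [he, Sym2.mem_iff]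
    rw [this, Set.ncard_pair hab]
  -- neighborhoods in SG
  have hSdeg1 : ∀ v : V, (SG.neighborSet (Sum.inl v)).ncard = (G.neighborSet v).ncard := by
    intro v
    have h1 : SG.neighborSet (Sum.inl v) = Sum.inr '' (I v) := by
      ext x
      rcases x with u | e
      · simp only [SimpleGraph.mem_neighborSet]
        constructor
        · intro h; exact (adj11 v u h).elim
        · rintro ⟨e, _, h⟩; exact absurd h (by simp)
      · simp only [SimpleGraph.mem_neighborSet]
        constructor
        · intro h; exact ⟨e, (adj12 v e).mp h, rfl⟩
        · rintro ⟨e', he', h⟩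
          have he : e' = e := Sum.inr_injective h
          exact (adj12 v e).mpr (he ▸ he')
    rw [h1, Set.ncard_image_of_injective _ Sum.inr_injective, hIcard]
  have hSdeg2 : ∀ e : ↥G.edgeSet, (SG.neighborSet (Sum.inr e)).ncard = 2 := by
    intro e
    have h1 : SG.neighborSet (Sum.inr e) = Sum.inl '' {v : V | v ∈ (e : Sym2 V)} := by
      ext x
      rcases x with u | e'
      · simp only [SimpleGraph.mem_neighborSet]
        constructor
        · intro h; exact ⟨u, (adj21 e u).mp h, rfl⟩
        · rintro ⟨u', hu', h⟩
          have hu : u' = u := Sum.inl_injective h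
          exact (adj21 e u).mpr (hu ▸ hu')
      · simp only [SimpleGraph.mem_neighborSet]
        constructor
        · intro h; exact (adj22 e e' h).elim
        · rintro ⟨u, _, h⟩; exact absurd h (by simp)
    rw [h1, Set.ncard_image_of_injective _ Sum.inl_injective, hend2]
  -- maxDeg of SG
  obtain ⟨vm, hvm⟩ := hmax
  have hSbdd : ∀ k ∈ {k | ∃ x : V ⊕ ↥G.edgeSet, k = (SG.neighborSet x).ncard}, k ≤ Δ := by
    rintro k ⟨x, rfl⟩
    rcases x with v | e
    · rw [hSdeg1]; exact hdegle v
    · rw [hSdeg2]; omega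
  have hmaxS : maxDeg SG = Δ := by
    apply le_antisymm
    · exact csSup_le ⟨(SG.neighborSet (Sum.inl vm)).ncard, ⟨_, rfl⟩⟩ hSbdd
    · have h2 := le_csSup (⟨Δ, hSbdd⟩ : BddAbove _)
        (⟨Sum.inl vm, rfl⟩ : (SG.neighborSet (Sum.inl vm)).ncard ∈
          {k | ∃ x : V ⊕ ↥G.edgeSet, k = (SG.neighborSet x).ncard})
      rw [hSdeg1, hvm] at h2
      exact h2
  -- LOWER BOUND
  have hlower : ∀ d ∈ {d | ∃ f : (V ⊕ ↥G.edgeSet) ⊕ ↥SG.edgeSet → Fin d, IsAVDTotalColoring SG f},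
      Δ + 1 ≤ d := by
    rintro d ⟨f, ⟨⟨p1, p2, p3⟩, _⟩⟩
    have hSE : ∀ e : ↥(I vm), SG.Adj (Sum.inl vm) (Sum.inr e.1) :=
      fun e => (adj12 vm e.1).mpr e.2
    set F : ↥(I vm) ⊕ Unit → Fin d := fun z =>
      match z with
      | Sum.inl e => f (Sum.inr ⟨s(Sum.inl vm, Sum.inr e.1), (SG.mem_edgeSet).mpr (hSE e)⟩)
      | Sum.inr _ => f (Sum.inl (Sum.inl vm)) with hF
    have hinj : Function.Injective F := by
      rintro (e1 | u1) (e2 | u2) h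
      · by_contra hne
        have hne12 : e1 ≠ e2 := fun h' => hne (by rw [h'])
        have hEne : (⟨s(Sum.inl vm, Sum.inr e1.1), (SG.mem_edgeSet).mpr (hSE e1)⟩ :
            ↥SG.edgeSet) ≠ ⟨s(Sum.inl vm, Sum.inr e2.1), (SG.mem_edgeSet).mpr (hSE e2)⟩ := by
          intro h'
          apply hne12
          have := Subtype.mk.injEq _ _ _ _ ▸ h'
          have h2 : (s(Sum.inl vm, Sum.inr e1.1) : Sym2 (V ⊕ ↥G.edgeSet)) = s(Sum.inl vm, Sum.inr e2.1) :=
            congrArg Subtype.val h'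
          rw [Sym2.eq_iff] at h2
          rcases h2 with ⟨_, h3⟩ | ⟨h3, _⟩
          · exact Subtype.ext (Sum.inr_injective h3)
          · exact absurd h3 (by simp)
        exact p2 _ _ hEne ⟨Sum.inl vm, by simp, by simp⟩ h
      · exact absurd h (p3 (Sum.inl vm) _ (by simp)).symm
      · exact absurd h (p3 (Sum.inl vm) _ (by simp))
      · rfl
    have hcard := Fintype.card_le_of_injective F hinj
    rw [Fintype.card_sum, Fintype.card_fin, Fintype.card_unit] at hcard
    have : Fintype.card ↥(I vm) = Δ := by
      rw [← Nat.card_eq_fintype_card, Nat.card_coe_set_eq, hIcard, hvm]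
    omega
  -- UPPER BOUND: construct a coloring with Δ + 1 colors
  have hΔpos : 0 < Δ := by omega
  set R : Finset (V × ↥G.edgeSet) := Finset.univ.filter (fun p => p.1 ∈ (p.2 : Sym2 V)) with hRdef
  have hmemR : ∀ (v : V) (e : ↥G.edgeSet), (v, e) ∈ R ↔ v ∈ (e : Sym2 V) := by
    intro v e; simp [hRdef]
  have hrowR : ∀ v : V, (R.filter (fun p => p.1 = v)).card ≤ Δ := by
    intro v
    have : (R.filter (fun p => p.1 = v)).card ≤ (I v).toFinset.card := by
      apply Finset.card_le_card_of_injOn (fun p => p.2)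
      · intro p hp
        simp only [Finset.mem_coe, Finset.mem_filter, hRdef, Finset.mem_univ, true_and] at hp
        rw [Finset.mem_coe, Set.mem_toFinset]
        exact hp.2 ▸ hp.1
      · intro p hp q hq hpq
        simp only [Finset.coe_filter, Set.mem_setOf_eq] at hp hq
        have : p.1 = q.1 := hp.2.trans hq.2.symm
        exact Prod.ext this hpq
    rw [Set.toFinset_card] at this
    calc (R.filter (fun p => p.1 = v)).card ≤ Fintype.card ↥(I v) := this
      _ = (I v).ncard := by rw [← Nat.card_eq_fintype_card, Nat.card_coe_set_eq]
      _ ≤ Δ := hIle v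
  have hcolR : ∀ e : ↥G.edgeSet, (R.filter (fun p => p.2 = e)).card ≤ Δ := by
    intro e
    have : (R.filter (fun p => p.2 = e)).card ≤ ({v : V | v ∈ (e : Sym2 V)}).toFinset.card := by
      apply Finset.card_le_card_of_injOn (fun p => p.1)
      · intro p hp
        simp only [Finset.mem_coe, Finset.mem_filter, hRdef, Finset.mem_univ, true_and] at hp
        rw [Finset.mem_coe, Set.mem_toFinset]
        exact hp.2 ▸ hp.1
      · intro p hp q hq hpq
        simp only [Finset.coe_filter, Set.mem_setOf_eq] at hp hq
        exact Prod.ext hpq (hp.2.trans hq.2.symm)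
    rw [Set.toFinset_card] at this
    calc (R.filter (fun p => p.2 = e)).card ≤ _ := this
      _ = ({v : V | v ∈ (e : Sym2 V)}).ncard := by
          rw [← Nat.card_eq_fintype_card, Nat.card_coe_set_eq]
      _ ≤ Δ := by rw [hend2]; omega
  obtain ⟨c, crow, ccol⟩ := konig_col Δ hΔpos R.card R rfl hrowR hcolR
  -- decode edges of SG
  have hdec : ∀ E : ↥SG.edgeSet, ∃ (v : V) (e : ↥G.edgeSet),
      (E : Sym2 (V ⊕ ↥G.edgeSet)) = s(Sum.inl v, Sum.inr e) ∧ v ∈ (e : Sym2 V) := by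
    rintro ⟨z, hz⟩
    induction z using Sym2.ind with
    | _ a b =>
      rw [SimpleGraph.mem_edgeSet] at hz
      rcases a with v | e <;> rcases b with v' | e'
      · exact (adj11 _ _ hz).elim
      · exact ⟨v, e', rfl, (adj12 _ _).mp hz⟩
      · exact ⟨v', e, Sym2.eq_swap, (adj21 _ _).mp hz⟩
      · exact (adj22 _ _ hz).elim
  choose dv de hdecEq hdecMem using hdec
  have huniq : ∀ (v v' : V) (e e' : ↥G.edgeSet),
      (s(Sum.inl v, Sum.inr e) : Sym2 (V ⊕ ↥G.edgeSet)) = s(Sum.inl v', Sum.inr e') → v = v' ∧ e = e' := by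
    intro v v' e e' h
    rw [Sym2.eq_iff] at h
    rcases h with ⟨h1, h2⟩ | ⟨h1, _⟩
    · exact ⟨Sum.inl_injective h1, Sum.inr_injective h2⟩
    · exact absurd h1 (by simp)
  -- colors of edge-vertices
  have hEex : ∀ e : ↥G.edgeSet, ∃ γ : Fin (Δ + 1), γ ≠ 0 ∧
      ∀ v : V, v ∈ (e : Sym2 V) → γ ≠ (c v e).succ := by
    intro e
    obtain ⟨a, b, hab, he⟩ := hedge2 e
    set bad : Finset (Fin (Δ + 1)) := {0, (c a e).succ, (c b e).succ} with hbad
    have hbadcard : bad.card ≤ 3 := by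
      calc bad.card ≤ _ := Finset.card_insert_le _ _
        _ ≤ 3 := by
          have := Finset.card_insert_le ((c a e).succ) ({(c b e).succ} : Finset (Fin (Δ+1)))
          simp only [Finset.card_singleton] at this ⊢
          omega
    have hcompl : (badᶜ).Nonempty := by
      rw [← Finset.card_pos, Finset.card_compl, Fintype.card_fin]
      omega
    obtain ⟨γ, hγ⟩ := hcompl
    rw [Finset.mem_compl, hbad] at hγ
    simp only [Finset.mem_insert, Finset.mem_singleton] at hγ
    push_neg at hγ
    refine ⟨γ, hγ.1, ?_⟩
    intro v hv
    rw [he, Sym2.mem_iff] at hv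
    rcases hv with rfl | rfl
    · exact hγ.2.1
    · exact hγ.2.2
  choose hE hEne0 hEneHalf using hEex
  -- the total coloring
  set f : (V ⊕ ↥G.edgeSet) ⊕ ↥SG.edgeSet → Fin (Δ + 1) := fun z =>
    match z with
    | Sum.inl (Sum.inl _) => 0
    | Sum.inl (Sum.inr e) => hE e
    | Sum.inr E => (c (dv E) (de E)).succ with hfdef
  have hf2 : ∀ e : ↥G.edgeSet, f (Sum.inl (Sum.inr e)) = hE e := fun _ => rfl
  have hf3 : ∀ E : ↥SG.edgeSet, f (Sum.inr E) = (c (dv E) (de E)).succ := fun _ => rfl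
  have hfE : ∀ E : ↥SG.edgeSet, f (Sum.inr E) ≠ 0 := fun E => Fin.succ_ne_zero _
  have hproper : IsProperTotalColoring SG f := by
    refine ⟨?_, ?_, ?_⟩
    · rintro (u | e) (v | e') hadj
      · exact (adj11 _ _ hadj).elim
      · exact fun h => (hEne0 e') h.symm
      · exact hEne0 e
      · exact (adj22 _ _ hadj).elim
    · intro E E' hne hshare
      obtain ⟨w, hw1, hw2⟩ := hshare
      rw [hdecEq E, Sym2.mem_iff] at hw1
      rw [hdecEq E', Sym2.mem_iff] at hw2
      have hval : (E : Sym2 (V ⊕ ↥G.edgeSet)) ≠ (E' : Sym2 (V ⊕ ↥G.edgeSet)) := fun h => hne (Subtype.ext h)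
      rcases hw1 with rfl | rfl
      · rcases hw2 with hw2 | hw2
        · -- shared original vertex
          have hv : dv E = dv E' := Sum.inl_injective hw2
          have hene : de E ≠ de E' := by
            intro h
            apply hval
            rw [hdecEq E, hdecEq E', hv, h]
          intro h
          rw [hf3, hf3, hv] at h
          exact crow (dv E') (de E) (de E')
            (hv ▸ (hmemR _ _).mpr (hdecMem E)) ((hmemR _ _).mpr (hdecMem E')) hene
            (Fin.succ_injective _ h)
        · exact absurd hw2 (by simp)
      · rcases hw2 with hw2 | hw2
        · exact absurd hw2 (by simp)
        · -- shared subdivision vertex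
          have hee : de E = de E' := Sum.inr_injective hw2
          have hvne : dv E ≠ dv E' := by
            intro h
            apply hval
            rw [hdecEq E, hdecEq E', h, hee]
          intro h
          rw [hf3, hf3, hee] at h
          exact ccol (dv E) (dv E') (de E')
            (hee ▸ (hmemR _ _).mpr (hdecMem E)) ((hmemR _ _).mpr (hdecMem E')) hvne
            (Fin.succ_injective _ h)
    · rintro (v | e) E hmem
      · exact fun h => (Fin.succ_ne_zero _) h.symm
      · rw [hdecEq E, Sym2.mem_iff] at hmem
        rcases hmem with hmem | hmem
        · exact absurd hmem (by simp)
        · have he : e = de E := Sum.inr_injective hmem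
          intro h
          rw [hf2, hf3, he] at h
          exact hEneHalf (de E) (dv E) (hdecMem E) h
  have havd : IsAVDTotalColoring SG f := by
    refine ⟨hproper, ?_⟩
    have key : ∀ (v : V) (e : ↥G.edgeSet),
        totalColorClass SG f (Sum.inl v) ≠ totalColorClass SG f (Sum.inr e) := by
      intro v e heq
      have h0 : (0 : Fin (Δ + 1)) ∈ totalColorClass SG f (Sum.inl v) :=
        Set.mem_union_left _ rfl
      rw [heq] at h0
      rcases Set.mem_union _ _ _ |>.mp h0 with h0 | ⟨E, -, h0⟩
      · exact (hEne0 e) (Set.mem_singleton_iff.mp h0).symm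
      · exact hfE E h0.symm
    rintro (u | e) (v | e') hadj
    · exact (adj11 _ _ hadj).elim
    · exact key u e'
    · exact fun h => key v e h.symm
    · exact (adj22 _ _ hadj).elim
  -- conclude
  have hmem : Δ + 1 ∈ {d | ∃ f : (V ⊕ ↥G.edgeSet) ⊕ ↥SG.edgeSet → Fin d, IsAVDTotalColoring SG f} :=
    ⟨f, havd⟩
  have hchrom : avdTotalChromaticNumber SG = Δ + 1 := by
    unfold avdTotalChromaticNumber
    exact le_antisymm (Nat.sInf_le hmem) (le_csInf ⟨Δ + 1, hmem⟩ hlower)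
  exact ⟨by rw [hchrom, hmaxS], hmaxS⟩
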